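/- Let G be a minimal counterexample (fewest vertices, then most edges) among planar graphs of maximum degree Δ ≤ 6 with χ₂(G) > 21. Then G does not contain a vertex of degree 5 all of whose incident faces are triangles, nor a vertex of degree 4 incident to at least three triangular faces. -/

import Mathlib

open SimpleGraph

/-- The square of a graph `G`: two distinct vertices are adjacent iff they are at
distance at most 2 in `G`. -/
def SimpleGraph.square {V : Type*} (G : SimpleGraph V) : SimpleGraph V where
  Adj u v := u ≠ v ∧ (G.Adj u v ∨ ∃ w, G.Adj u w ∧ G.Adj w v)
  symm := ⟨fun u v ⟨h1, h2⟩ => ⟨h1.symm, h2.elim (fun h => Or.inl h.symm)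
    (fun ⟨w, h3, h4⟩ => Or.inr ⟨w, h4.symm, h3.symm⟩)⟩⟩
  loopless := ⟨fun _ h => h.1 rfl⟩

/-- The 2-chromatic number of a graph: the chromatic number of its square. -/
noncomputable def chi2 {V : Type*} (G : SimpleGraph V) : ℕ∞ :=
  G.square.chromaticNumber

/-- The degree of a vertex, as a cardinality (instance-free). -/
noncomputable def degN {V : Type*} (G : SimpleGraph V) (v : V) : ℕ :=
  Nat.card {u // G.Adj v u}

/-- `G` has maximum degree `Δ`. -/
def maxDegIs {V : Type*} (G : SimpleGraph V) (Δ : ℕ) : Prop :=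
  (∀ v, degN G v ≤ Δ) ∧ ∃ v, degN G v = Δ

/-- A graph is planar if it has a drawing in the plane: an injective placement of the
vertices and, for each edge, a simple arc joining the endpoints, such that arcs avoid
all vertex points and the interiors of arcs of distinct edges are disjoint. -/
def IsPlanar {V : Type*} (G : SimpleGraph V) : Prop :=
  ∃ (pos : V → ℝ × ℝ) (arc : V → V → ℝ → ℝ × ℝ),
    Function.Injective pos ∧
    (∀ u v, G.Adj u v →
      Continuous (arc u v) ∧ arc u v 0 = pos u ∧ arc u v 1 = pos v ∧
      Set.InjOn (arc u v) (Set.Icc 0 1) ∧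
      ∀ w, pos w ∉ arc u v '' Set.Ioo 0 1) ∧
    ∀ u v x y, G.Adj u v → G.Adj x y → s(u, v) ≠ s(x, y) →
      Disjoint (arc u v '' Set.Ioo 0 1) (arc x y '' Set.Ioo 0 1)

/-- `G` is a minimal counterexample (fewest vertices, then most edges) among planar
graphs of maximum degree at most `6` to the bound `χ₂ ≤ 21`. -/
def MinimalCex6 {V : Type*} [Fintype V] (G : SimpleGraph V) : Prop :=
  IsPlanar G ∧ (∀ v, degN G v ≤ 6) ∧ (21 : ℕ∞) < chi2 G ∧
  ∀ (n : ℕ) (H : SimpleGraph (Fin n)), IsPlanar H →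
    (∀ v, degN H v ≤ 6) →
    (n < Fintype.card V ∨
      (n = Fintype.card V ∧ Nat.card G.edgeSet < Nat.card H.edgeSet)) →
    chi2 H ≤ (21 : ℕ∞)

section Comb

variable {V : Type*} [Fintype V] [DecidableEq V] (G : SimpleGraph V) [DecidableRel G.Adj]

/-- The involution exchanging the two darts of each edge. -/
def dartSymmPerm : Equiv.Perm G.Dart :=
  ⟨SimpleGraph.Dart.symm, SimpleGraph.Dart.symm,
    fun d => d.symm_symm, fun d => d.symm_symm⟩

/-- A combinatorial plane embedding (rotation system) of `G`: a permutation of the darts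
whose cycles are exactly the sets of darts sharing a tail vertex. -/
structure PlaneEmbedding where
  rot : Equiv.Perm G.Dart
  same_vertex : ∀ d d' : G.Dart, rot.SameCycle d d' ↔ d.toProd.1 = d'.toProd.1

variable {G}

/-- The face-tracing permutation of an embedding. -/
def PlaneEmbedding.facePerm (e : PlaneEmbedding G) : Equiv.Perm G.Dart :=
  e.rot * dartSymmPerm G

/-- Darts lying on the same face. -/
def PlaneEmbedding.faceSetoid (e : PlaneEmbedding G) : Setoid G.Dart :=
  ⟨e.facePerm.SameCycle,
    ⟨fun _ => Equiv.Perm.SameCycle.refl _ _, fun h => h.symm, fun h h' => h.trans h'⟩⟩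

/-- The faces of an embedding: orbits of the face-tracing permutation on darts. -/
def PlaneEmbedding.Faces (e : PlaneEmbedding G) : Type _ := Quotient e.faceSetoid

/-- The degree of a face: the number of darts on it (so cut-edges count twice). -/
noncomputable def PlaneEmbedding.faceDeg (e : PlaneEmbedding G) (f : e.Faces) : ℕ :=
  Nat.card {d : G.Dart // Quotient.mk e.faceSetoid d = f}

/-- A vertex is incident to a face if some dart of the face has it as tail. -/
def PlaneEmbedding.VertexOnFace (e : PlaneEmbedding G) (v : V) (f : e.Faces) : Prop :=
  ∃ d : G.Dart, d.toProd.1 = v ∧ Quotient.mk e.faceSetoid d = f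

/-- A vertex is triangulated if all its incident faces are triangles. -/
def PlaneEmbedding.Triangulated (e : PlaneEmbedding G) (v : V) : Prop :=
  ∀ f : e.Faces, e.VertexOnFace v f → e.faceDeg f = 3

noncomputable instance (e : PlaneEmbedding G) : Fintype e.Faces :=
  @Fintype.ofFinite _ (Quotient.finite _)

/-- The embedding is on the sphere: Euler's formula holds. -/
def PlaneEmbedding.IsSphere (e : PlaneEmbedding G) : Prop :=
  (Fintype.card V : ℤ) - G.edgeFinset.card + Nat.card e.Faces = 2

end Comb

theorem Equiv.Perm.apply_inv_self {α : Type*} (f : Equiv.Perm α) (x : α) : f (f⁻¹ x) = x :=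
  Equiv.apply_symm_apply f x

theorem Equiv.Perm.inv_apply_self {α : Type*} (f : Equiv.Perm α) (x : α) : f⁻¹ (f x) = x :=
  Equiv.symm_apply_apply f x

open SimpleGraph Function Set

section A
variable {V W : Type*}

lemma isPlanar_comap (G : SimpleGraph V) (φ : W → V) (hφ : Function.Injective φ)
    (h : IsPlanar G) : IsPlanar (G.comap φ) := by
  obtain ⟨pos, arc, hinj, harc, hdisj⟩ := h
  refine ⟨pos ∘ φ, fun a b => arc (φ a) (φ b), hinj.comp hφ, ?_, ?_⟩
  · intro u v huv
    obtain ⟨h1, h2, h3, h4, h5⟩ := harc _ _ huv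
    exact ⟨h1, h2, h3, h4, fun w => h5 (φ w)⟩
  · intro u v x y h1 h2 hne
    refine hdisj _ _ _ _ h1 h2 (fun hc => hne ?_)
    rw [← Sym2.map_pair_eq φ, ← Sym2.map_pair_eq φ] at hc
    exact Sym2.map.injective hφ hc

lemma degN_comap_le [Finite V] (G : SimpleGraph V) (φ : W → V) (hφ : Function.Injective φ)
    (w : W) : degN (G.comap φ) w ≤ degN G (φ w) :=
  Nat.card_le_card_of_injective (fun x => ⟨φ x.1, x.2⟩)
    (fun a b h => Subtype.ext (hφ (congrArg Subtype.val h)))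

lemma square_colorable_comap (G : SimpleGraph V) (φ : W ≃ V) {n : ℕ}
    (h : (G.comap φ).square.Colorable n) : G.square.Colorable n := by
  obtain ⟨c⟩ := h
  refine ⟨SimpleGraph.Coloring.mk (fun x => c (φ.symm x)) ?_⟩
  rintro x y ⟨hne, hadj⟩
  refine c.valid ⟨fun hc => hne (by simpa using congrArg φ hc), ?_⟩
  rcases hadj with h | ⟨w, h1, h2⟩
  · exact Or.inl (by simpa using h)
  · exact Or.inr ⟨φ.symm w, by simpa using h1, by simpa using h2⟩

end A

section B
variable {V : Type*}

lemma extend_coloring [Fintype V] (G : SimpleGraph V) (v : V)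
    (H : SimpleGraph {u : V // u ≠ v})
    (hH : H.square.Colorable 21)
    (htrans : ∀ x y (hx : x ≠ v) (hy : y ≠ v), G.square.Adj x y →
      H.square.Adj ⟨x, hx⟩ ⟨y, hy⟩)
    (hcard : Nat.card {u // G.square.Adj v u} ≤ 20) :
    G.square.Colorable 21 := by
  classical
  obtain ⟨c⟩ := hH
  set S : Finset V := Finset.univ.filter (fun u => G.square.Adj v u) with hS
  have hSne : ∀ u ∈ S, u ≠ v := by
    intro u hu
    simp only [hS, Finset.mem_filter] at hu
    exact (hu.2.1).symm
  have hScard : S.card ≤ 20 := by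
    have : Nat.card {u // G.square.Adj v u} = S.card := by
      rw [Nat.card_eq_fintype_card, Fintype.card_subtype]
    omega
  set used : Finset (Fin 21) := S.attach.image
    (fun u => c ⟨u.1, hSne u.1 u.2⟩) with hused
  have husedcard : used.card ≤ 20 :=
    le_trans (Finset.card_image_le.trans (by simp)) hScard
  have : ∃ a : Fin 21, a ∉ used := by
    by_contra hcon
    push_neg at hcon
    have : used = Finset.univ := Finset.eq_univ_iff_forall.mpr hcon
    rw [this, Finset.card_univ] at husedcard
    simp at husedcard
  obtain ⟨a, ha⟩ := this
  refine ⟨SimpleGraph.Coloring.mk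
    (fun x => if h : x = v then a else c ⟨x, h⟩) ?_⟩
  intro x y hadj
  have hxy : x ≠ y := hadj.1
  by_cases hx : x = v <;> by_cases hy : y = v
  · exact absurd (hx.trans hy.symm) hxy
  · subst hx
    simp only [dif_pos rfl, dif_neg hy]
    intro hc
    apply ha
    rw [hused, Finset.mem_image]
    have hyS : y ∈ S := by
      simp only [hS, Finset.mem_filter]
      exact ⟨Finset.mem_univ _, hadj⟩
    exact ⟨⟨y, hyS⟩, Finset.mem_attach _ _, hc.symm⟩
  · subst hy
    simp only [dif_pos rfl, dif_neg hx]
    intro hc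
    apply ha
    rw [hused, Finset.mem_image]
    have hxS : x ∈ S := by
      simp only [hS, Finset.mem_filter]
      exact ⟨Finset.mem_univ _, hadj.symm⟩
    exact ⟨⟨x, hxS⟩, Finset.mem_attach _ _, hc⟩
  · simp only [dif_neg hx, dif_neg hy]
    exact c.valid (htrans x y hx hy hadj)

lemma minCex_apply {V : Type*} [Fintype V] {G : SimpleGraph V} (hmin : MinimalCex6 G) (v : V)
    (H : SimpleGraph {u : V // u ≠ v}) (hp : IsPlanar H) (hd : ∀ w, degN H w ≤ 6) :
    H.square.Colorable 21 := by
  classical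
  set n := Fintype.card {u : V // u ≠ v} with hn
  let ψ : Fin n ≃ {u : V // u ≠ v} := (Fintype.equivFin _).symm
  have hp' : IsPlanar (H.comap ψ) := isPlanar_comap H ψ ψ.injective hp
  have hd' : ∀ i, degN (H.comap ψ) i ≤ 6 := fun i =>
    le_trans (degN_comap_le H ψ ψ.injective i) (hd _)
  have hlt : n < Fintype.card V := Fintype.card_subtype_lt (x := v) (by simp)
  have h21 := hmin.2.2.2 n (H.comap ψ) hp' hd' (Or.inl hlt)
  rw [chi2] at h21
  have : (21 : ℕ∞) = ((21 : ℕ) : ℕ∞) := by norm_num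
  rw [this, SimpleGraph.chromaticNumber_le_iff_colorable] at h21
  exact square_colorable_comap H ψ h21

end B

section C
variable {V : Type*} [Fintype V] [DecidableEq V] {G : SimpleGraph V} [DecidableRel G.Adj]
variable (e : PlaneEmbedding G)

lemma tail_rot (d : G.Dart) : (e.rot d).toProd.1 = d.toProd.1 :=
  ((e.same_vertex d (e.rot d)).mp ⟨1, by simp⟩).symm

/-- The darts with tail `v`. -/
def dartsAt (G : SimpleGraph V) [DecidableRel G.Adj] (v : V) : Finset G.Dart :=
  Finset.univ.filter (fun d => d.toProd.1 = v)

lemma mem_dartsAt {v : V} {d : G.Dart} : d ∈ dartsAt G v ↔ d.toProd.1 = v := by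
  simp [dartsAt]

lemma rot_isCycleOn (v : V) : e.rot.IsCycleOn ((dartsAt G v : Finset G.Dart) : Set G.Dart) := by
  constructor
  · refine ⟨fun d hd => ?_, e.rot.injective.injOn, fun d hd => ⟨e.rot⁻¹ d, ?_, by simp⟩⟩
    · simp only [Finset.mem_coe, mem_dartsAt] at *
      rw [tail_rot]; exact hd
    · simp only [Finset.mem_coe, mem_dartsAt] at *
      rw [← hd]
      conv_rhs => rw [← Equiv.Perm.apply_inv_self e.rot d]
      exact (tail_rot e _).symm
  · intro x hx y hy
    simp only [Finset.mem_coe, mem_dartsAt] at hx hy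
    exact (e.same_vertex x y).mpr (hx.trans hy.symm)

lemma card_dartsAt (v : V) : (dartsAt G v).card = degN G v := by
  classical
  rw [degN, Nat.card_eq_fintype_card, Fintype.card_subtype]
  refine Finset.card_bij (fun d _ => d.toProd.2) ?_ ?_ ?_
  · intro d hd
    rw [mem_dartsAt] at hd
    simp only [Finset.mem_filter, Finset.mem_univ, true_and]
    exact hd ▸ d.adj
  · intro d1 h1 d2 h2 heq
    rw [mem_dartsAt] at h1 h2
    exact SimpleGraph.Dart.ext _ _ (Prod.ext (h1.trans h2.symm) heq)
  · intro u hu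
    simp only [Finset.mem_filter, Finset.mem_univ, true_and] at hu
    exact ⟨SimpleGraph.Dart.mk (v, u) hu, by rw [mem_dartsAt], rfl⟩

lemma rot_pow_ne (v : V) {d : G.Dart} (hd : d ∈ dartsAt G v) {i : ℕ} (hi : 0 < i)
    (hilt : i < (dartsAt G v).card) : (e.rot ^ i) d ≠ d := by
  intro hfix
  have hsub : dartsAt G v ⊆ (Finset.range i).image (fun k => (e.rot ^ k) d) := by
    intro d' hd'
    obtain ⟨k, hk, hkd⟩ := (rot_isCycleOn e v).exists_pow_eq
      (Finset.mem_coe.mpr hd) (Finset.mem_coe.mpr hd')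
    refine Finset.mem_image.mpr ⟨k % i, Finset.mem_range.mpr (Nat.mod_lt _ hi), ?_⟩
    rw [← hkd]
    conv_rhs => rw [← Nat.mod_add_div k i]
    rw [pow_add, pow_mul, Equiv.Perm.mul_apply]
    exact (congrArg _ (Function.IsFixedPt.perm_pow hfix (k / i))).symm
  have := Finset.card_le_card hsub
  have := Finset.card_image_le (s := Finset.range i) (f := fun k => (e.rot ^ k) d)
  rw [Finset.card_range] at this
  omega

end C

section D
variable {V : Type*} [Fintype V] [DecidableEq V] {G : SimpleGraph V} [DecidableRel G.Adj]
variable (e : PlaneEmbedding G)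

lemma facePerm_cube (d : G.Dart)
    (h3 : e.faceDeg (Quotient.mk e.faceSetoid d) = 3) :
    e.facePerm (e.facePerm (e.facePerm d)) = d := by
  classical
  set C : Finset G.Dart := Finset.univ.filter (fun d' => e.facePerm.SameCycle d d') with hC
  have hmem : ∀ d', d' ∈ C ↔ e.facePerm.SameCycle d d' := by simp [hC]
  have hcyc : e.facePerm.IsCycleOn (C : Set G.Dart) := by
    constructor
    · refine ⟨fun x hx => ?_, e.facePerm.injective.injOn,
        fun x hx => ⟨e.facePerm⁻¹ x, ?_, by simp⟩⟩
      · simp only [Finset.mem_coe, hmem] at *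
        exact hx.trans ⟨1, by simp⟩
      · simp only [Finset.mem_coe, hmem] at *
        exact hx.trans ⟨-1, by simp⟩
    · intro x hx y hy
      simp only [Finset.mem_coe, hmem] at hx hy
      exact hx.symm.trans hy
  have hcard : C.card = 3 := by
    rw [← h3]
    unfold PlaneEmbedding.faceDeg
    rw [Nat.card_eq_fintype_card, Fintype.card_subtype]
    congr 1; ext d'
    simp only [hC, Finset.mem_filter, Finset.mem_univ, true_and]
    rw [Quotient.eq]
    exact ⟨fun h => h.symm, fun h => h.symm⟩
  have hd : d ∈ C := (hmem d).mpr (Equiv.Perm.SameCycle.refl _ _)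
  have hpow := hcyc.pow_card_apply hd
  rw [hcard] at hpow
  simpa [pow_succ, Equiv.Perm.mul_apply] using hpow

lemma triangle_adj (d : G.Dart)
    (h3 : e.faceDeg (Quotient.mk e.faceSetoid d) = 3) :
    G.Adj d.toProd.2 (e.rot⁻¹ d).toProd.2 := by
  have hF : ∀ d' : G.Dart, e.facePerm d' = e.rot d'.symm := fun d' => rfl
  set d1 := e.facePerm d with hd1
  set d2 := e.facePerm d1 with hd2
  have hcube : e.facePerm d2 = d := facePerm_cube e d h3
  have h2 : d2.symm = e.rot⁻¹ d := by
    apply e.rot.injective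
    rw [Equiv.Perm.apply_inv_self, ← hF d2]
    exact hcube
  have t1 : d1.toProd.1 = d.toProd.2 := by
    rw [hd1, hF, tail_rot]
    rfl
  have t2 : d2.toProd.1 = d1.toProd.2 := by
    rw [hd2, hF, tail_rot]
    rfl
  have t3 : d2.toProd.1 = (e.rot⁻¹ d).toProd.2 := by
    have hh : d2 = (e.rot⁻¹ d).symm := by rw [← h2]; exact (SimpleGraph.Dart.symm_symm d2).symm
    rw [hh]
    rfl
  have hadj := d1.adj
  rw [t1, t2.symm.trans t3] at hadj
  exact hadj

end D

section E
variable {V : Type*} [Fintype V] [DecidableEq V] {G : SimpleGraph V} [DecidableRel G.Adj]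
variable (e : PlaneEmbedding G)

lemma dart_head_adj {v : V} {d : G.Dart} (hd : d ∈ dartsAt G v) : G.Adj v d.toProd.2 := by
  rw [mem_dartsAt] at hd; exact hd ▸ d.adj

lemma head_inj {v : V} {d d' : G.Dart} (hd : d ∈ dartsAt G v) (hd' : d' ∈ dartsAt G v)
    (h : d.toProd.2 = d'.toProd.2) : d = d' :=
  SimpleGraph.Dart.ext _ _
    (Prod.ext ((mem_dartsAt.mp hd).trans (mem_dartsAt.mp hd').symm) h)

lemma rot_mem {v : V} {d : G.Dart} (hd : d ∈ dartsAt G v) : e.rot d ∈ dartsAt G v := by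
  rw [mem_dartsAt] at *
  rw [tail_rot]; exact hd

lemma tri_step {v : V} (htri : e.Triangulated v) {d : G.Dart} (hd : d ∈ dartsAt G v) :
    G.Adj (e.rot d).toProd.2 d.toProd.2 := by
  have h3 := htri (Quotient.mk e.faceSetoid (e.rot d))
    ⟨e.rot d, mem_dartsAt.mp (rot_mem e hd), rfl⟩
  have h := triangle_adj e (e.rot d) h3
  rwa [Equiv.Perm.inv_apply_self] at h

lemma case1_pair {v : V} (h5 : degN G v = 5) (htri : e.Triangulated v)
    {x y : V} (hx : G.Adj v x) (hy : G.Adj v y) (hxy : x ≠ y) :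
    G.Adj x y ∨ ∃ w, w ≠ v ∧ G.Adj x w ∧ G.Adj w y := by
  have hcard : (dartsAt G v).card = 5 := (card_dartsAt (G := G) v).trans h5
  set dx : G.Dart := ⟨(v, x), hx⟩ with hdxdef
  set dy : G.Dart := ⟨(v, y), hy⟩ with hdydef
  have hdx : dx ∈ dartsAt G v := mem_dartsAt.mpr rfl
  have hdy : dy ∈ dartsAt G v := mem_dartsAt.mpr rfl
  have key2 : ∀ {da db : G.Dart}, da ∈ dartsAt G v → e.rot (e.rot da) = db →
      ∃ w, w ≠ v ∧ G.Adj da.toProd.2 w ∧ G.Adj w db.toProd.2 := by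
    intro da db hda hrel
    refine ⟨(e.rot da).toProd.2, (dart_head_adj (rot_mem e hda)).ne', 
      (tri_step e htri hda).symm, ?_⟩
    have h := tri_step e htri (rot_mem e hda)
    rw [hrel] at h
    exact h.symm
  have h5x := (rot_isCycleOn e v).pow_card_apply hdx
  rw [hcard] at h5x
  obtain ⟨k, hk5, hkeq⟩ := (rot_isCycleOn e v).exists_pow_eq hdx hdy
  rw [hcard] at hk5
  interval_cases k
  · rw [pow_zero] at hkeq
    exact absurd (congrArg (fun d => SimpleGraph.Dart.toProd d |>.2) hkeq) hxy
  · rw [pow_one] at hkeq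
    have h := tri_step e htri hdx
    rw [hkeq] at h
    exact Or.inl h.symm
  · have hrel : e.rot (e.rot dx) = dy := by
      rw [← hkeq]; rw [pow_succ, pow_one, Equiv.Perm.mul_apply]
    exact Or.inr (key2 hdx hrel)
  · have hrel : e.rot (e.rot dy) = dx := by
      have h2 : (e.rot ^ 2) dy = dx := by
        rw [← hkeq, ← Equiv.Perm.mul_apply, ← pow_add]
        exact h5x
      rw [← h2, pow_succ, pow_one, Equiv.Perm.mul_apply]
    obtain ⟨w, hwv, h1, h2⟩ := key2 hdy hrel
    exact Or.inr ⟨w, hwv, h2.symm, h1.symm⟩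
  · have hrel : e.rot dy = dx := by
      rw [← hkeq, ← Equiv.Perm.mul_apply, ← pow_succ']
      exact h5x
    have h := tri_step e htri hdy
    rw [hrel] at h
    exact Or.inl h
end E

section F
variable {V : Type*} [Fintype V] [DecidableEq V] {G : SimpleGraph V} [DecidableRel G.Adj]
variable (e : PlaneEmbedding G)

lemma degN_eq_card_filter (v : V) :
    degN G v = (Finset.univ.filter (fun u => G.Adj v u)).card := by
  rw [degN, Nat.card_eq_fintype_card, Fintype.card_subtype]

lemma rot_inv_mem {v : V} {d : G.Dart} (hd : d ∈ dartsAt G v) : e.rot⁻¹ d ∈ dartsAt G v := by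
  rw [mem_dartsAt] at *
  rw [← hd]
  conv_rhs => rw [← Equiv.Perm.apply_inv_self e.rot d]
  exact (tail_rot e _).symm

lemma case1_card {v : V} (h5 : degN G v = 5) (htri : e.Triangulated v)
    (hdeg : ∀ u, degN G u ≤ 6) :
    Nat.card {u // G.square.Adj v u} ≤ 20 := by
  classical
  set N : Finset V := Finset.univ.filter (fun u => G.Adj v u) with hN
  have hNcard : N.card = 5 := by rw [hN, ← degN_eq_card_filter]; exact h5
  set M : V → Finset V := fun u => Finset.univ.filter
      (fun y => G.Adj u y ∧ ¬ G.Adj v y ∧ y ≠ v) with hM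
  have hMcard : ∀ u ∈ N, (M u).card ≤ 3 := by
    intro u hu
    rw [hN, Finset.mem_filter] at hu
    have huv : G.Adj v u := hu.2
    set d : G.Dart := ⟨(v, u), huv⟩ with hddef
    have hd : d ∈ dartsAt G v := mem_dartsAt.mpr rfl
    set w1 := (e.rot d).toProd.2 with hw1
    set w2 := (e.rot⁻¹ d).toProd.2 with hw2
    have hvw1 : G.Adj v w1 := dart_head_adj (rot_mem e hd)
    have hvw2 : G.Adj v w2 := dart_head_adj (rot_inv_mem e hd)
    have huw1 : G.Adj u w1 := (tri_step e htri hd).symm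
    have huw2 : G.Adj u w2 :=
      triangle_adj e d (htri _ ⟨d, rfl, rfl⟩)
    have hw12 : w1 ≠ w2 := by
      intro hc
      have : e.rot d = e.rot⁻¹ d :=
        head_inj (rot_mem e hd) (rot_inv_mem e hd) hc
      have h2 : (e.rot ^ 2) d = d := by
        rw [pow_succ, pow_one, Equiv.Perm.mul_apply, this, Equiv.Perm.apply_inv_self]
      refine rot_pow_ne e v hd (by norm_num) ?_ h2
      rw [card_dartsAt, h5]; norm_num
    have hsub : M u ⊆ (Finset.univ.filter (fun y => G.Adj u y)) \ {v, w1, w2} := by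
      intro y hy
      rw [hM, Finset.mem_filter] at hy
      obtain ⟨-, hy1, hy2, hy3⟩ := hy
      rw [Finset.mem_sdiff, Finset.mem_filter]
      refine ⟨⟨Finset.mem_univ _, hy1⟩, ?_⟩
      simp only [Finset.mem_insert, Finset.mem_singleton]
      push_neg
      exact ⟨hy3, fun hc => hy2 (hc ▸ hvw1), fun hc => hy2 (hc ▸ hvw2)⟩
    have htsub : ({v, w1, w2} : Finset V) ⊆ Finset.univ.filter (fun y => G.Adj u y) := by
      intro z hz
      simp only [Finset.mem_insert, Finset.mem_singleton] at hz
      rw [Finset.mem_filter]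
      rcases hz with rfl | rfl | rfl
      · exact ⟨Finset.mem_univ _, huv.symm⟩
      · exact ⟨Finset.mem_univ _, huw1⟩
      · exact ⟨Finset.mem_univ _, huw2⟩
    have hc3 : ({v, w1, w2} : Finset V).card = 3 := by
      rw [Finset.card_insert_of_notMem, Finset.card_insert_of_notMem,
        Finset.card_singleton]
      · simp [hw12]
      · simp only [Finset.mem_insert, Finset.mem_singleton]
        push_neg
        exact ⟨hvw1.ne, hvw2.ne⟩
    have := Finset.card_le_card hsub
    rw [Finset.card_sdiff_of_subset htsub, hc3, ← degN_eq_card_filter] at this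
    have := hdeg u
    omega
  have hsq : Finset.univ.filter (fun u => G.square.Adj v u) ⊆ N ∪ N.biUnion M := by
    intro y hy
    rw [Finset.mem_filter] at hy
    obtain ⟨-, hne, hor⟩ := hy
    by_cases hvy : G.Adj v y
    · exact Finset.mem_union_left _ (by rw [hN, Finset.mem_filter]; exact ⟨Finset.mem_univ _, hvy⟩)
    · rcases hor with h | ⟨w, h1, h2⟩
      · exact absurd h hvy
      · refine Finset.mem_union_right _ (Finset.mem_biUnion.mpr ⟨w, ?_, ?_⟩)
        · rw [hN, Finset.mem_filter]; exact ⟨Finset.mem_univ _, h1⟩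
        · rw [hM, Finset.mem_filter]
          exact ⟨Finset.mem_univ _, h2, hvy, hne.symm⟩
  have h1 : Nat.card {u // G.square.Adj v u}
      = (Finset.univ.filter (fun u => G.square.Adj v u)).card := by
    rw [Nat.card_eq_fintype_card, Fintype.card_subtype]
  rw [h1]
  calc (Finset.univ.filter (fun u => G.square.Adj v u)).card
      ≤ (N ∪ N.biUnion M).card := Finset.card_le_card hsq
    _ ≤ N.card + (N.biUnion M).card := Finset.card_union_le _ _
    _ ≤ N.card + ∑ u ∈ N, (M u).card := by
        exact Nat.add_le_add_left (Finset.card_biUnion_le) _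
    _ ≤ 5 + 15 := by
        rw [hNcard]
        have := Finset.sum_le_card_nsmul N (fun u => (M u).card) 3 hMcard
        rw [hNcard] at this
        simp only [smul_eq_mul] at this
        omega
end F

section G1
variable {V : Type*} [Fintype V] [DecidableEq V] {G : SimpleGraph V} [DecidableRel G.Adj]

lemma chi2_le_of_colorable (h : G.square.Colorable 21) : chi2 G ≤ (21 : ℕ∞) := by
  rw [chi2]
  have := h.chromaticNumber_le
  rwa [show ((21 : ℕ) : ℕ∞) = (21 : ℕ∞) by norm_num] at this

lemma case1 (hmin : MinimalCex6 G) (e : PlaneEmbedding G) (v : V)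
    (h5 : degN G v = 5) (htri : e.Triangulated v) : False := by
  classical
  set H := G.comap (Subtype.val : {u : V // u ≠ v} → V) with hHdef
  have hp : IsPlanar H := isPlanar_comap G _ Subtype.val_injective hmin.1
  have hd : ∀ w, degN H w ≤ 6 := fun w =>
    le_trans (degN_comap_le G _ Subtype.val_injective w) (hmin.2.1 _)
  have hcol : H.square.Colorable 21 := minCex_apply hmin v H hp hd
  have htrans : ∀ x y (hx : x ≠ v) (hy : y ≠ v), G.square.Adj x y →
      H.square.Adj ⟨x, hx⟩ ⟨y, hy⟩ := by
    rintro x y hx hy ⟨hne, hor⟩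
    refine ⟨fun hc => hne (congrArg Subtype.val hc), ?_⟩
    rcases hor with h | ⟨w, h1, h2⟩
    · exact Or.inl h
    · by_cases hwv : w = v
      · subst hwv
        rcases case1_pair e h5 htri h1.symm h2 hne with h | ⟨w', hw', ha, hb⟩
        · exact Or.inl h
        · exact Or.inr ⟨⟨w', hw'⟩, ha, hb⟩
      · exact Or.inr ⟨⟨w, hwv⟩, h1, h2⟩
  have hcard := case1_card e h5 htri hmin.2.1
  have hc21 := extend_coloring G v H hcol htrans hcard
  exact absurd hmin.2.2.1 (not_lt.mpr (chi2_le_of_colorable hc21))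
end G1

section G2
variable {V : Type*} [Fintype V] [DecidableEq V] {G : SimpleGraph V} [DecidableRel G.Adj]
variable (e : PlaneEmbedding G)

lemma case2_struct {v : V} (h4 : degN G v = 4)
    (f1 f2 f3 : e.Faces) (h12 : f1 ≠ f2) (h13 : f1 ≠ f3) (h23 : f2 ≠ f3)
    (hf1 : e.faceDeg f1 = 3) (hf2 : e.faceDeg f2 = 3) (hf3 : e.faceDeg f3 = 3)
    (hv1 : e.VertexOnFace v f1) (hv2 : e.VertexOnFace v f2) (hv3 : e.VertexOnFace v f3) :
    ∃ b ∈ dartsAt G v, ∀ d ∈ dartsAt G v, d ≠ b →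
      e.faceDeg (Quotient.mk e.faceSetoid d) = 3 := by
  classical
  obtain ⟨d1, hd1t, hd1f⟩ := hv1
  obtain ⟨d2, hd2t, hd2f⟩ := hv2
  obtain ⟨d3, hd3t, hd3f⟩ := hv3
  have hD1 : d1 ∈ dartsAt G v := mem_dartsAt.mpr hd1t
  have hD2 : d2 ∈ dartsAt G v := mem_dartsAt.mpr hd2t
  have hD3 : d3 ∈ dartsAt G v := mem_dartsAt.mpr hd3t
  have hne12 : d1 ≠ d2 := fun hc => h12 (hd1f.symm.trans (hc ▸ hd2f))
  have hne13 : d1 ≠ d3 := fun hc => h13 (hd1f.symm.trans (hc ▸ hd3f))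
  have hne23 : d2 ≠ d3 := fun hc => h23 (hd2f.symm.trans (hc ▸ hd3f))
  set Gd := (dartsAt G v).filter
    (fun d => e.faceDeg (Quotient.mk e.faceSetoid d) = 3) with hGd
  have hmemGd : ∀ d f, d ∈ dartsAt G v → Quotient.mk e.faceSetoid d = f →
      e.faceDeg f = 3 → d ∈ Gd := by
    intro d f hd hdf hf
    rw [hGd, Finset.mem_filter]
    exact ⟨hd, by rw [hdf]; exact hf⟩
  have hsub : ({d1, d2, d3} : Finset G.Dart) ⊆ Gd := by
    intro z hz
    simp only [Finset.mem_insert, Finset.mem_singleton] at hz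
    rcases hz with rfl | rfl | rfl
    · exact hmemGd _ _ hD1 hd1f hf1
    · exact hmemGd _ _ hD2 hd2f hf2
    · exact hmemGd _ _ hD3 hd3f hf3
  have hc3 : ({d1, d2, d3} : Finset G.Dart).card = 3 := by
    rw [Finset.card_insert_of_notMem, Finset.card_insert_of_notMem,
      Finset.card_singleton]
    · simp [hne23]
    · simp only [Finset.mem_insert, Finset.mem_singleton]
      push_neg
      exact ⟨hne12, hne13⟩
  have hGdcard : 3 ≤ Gd.card := hc3 ▸ Finset.card_le_card hsub
  have hDcard : (dartsAt G v).card = 4 := (card_dartsAt (G := G) v).trans h4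
  set bad := dartsAt G v \ Gd with hbad
  have hbadcard : bad.card ≤ 1 := by
    have hGdsub : Gd ⊆ dartsAt G v := by
      rw [hGd]; exact Finset.filter_subset _ _
    rw [hbad, Finset.card_sdiff_of_subset hGdsub]
    omega
  have hgoodOf : ∀ d ∈ dartsAt G v, d ∉ bad →
      e.faceDeg (Quotient.mk e.faceSetoid d) = 3 := by
    intro d hd hdb
    rw [hbad, Finset.mem_sdiff] at hdb
    push_neg at hdb
    have := hdb hd
    rw [hGd, Finset.mem_filter] at this
    exact this.2
  by_cases hb : bad.Nonempty
  · obtain ⟨β, hβ⟩ := hb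
    have hβD : β ∈ dartsAt G v := (Finset.mem_sdiff.mp hβ).1
    refine ⟨β, hβD, fun d hd hdβ => hgoodOf d hd (fun hdb => hdβ ?_)⟩
    exact Finset.card_le_one.mp hbadcard _ hdb _ hβ
  · refine ⟨d1, hD1, fun d hd _ => hgoodOf d hd (fun hdb => hb ⟨d, hdb⟩)⟩

lemma case2_card {v x0 x1 x2 x3 : V} (h4 : degN G v = 4) (hdeg : ∀ u, degN G u ≤ 6)
    (hv0 : G.Adj v x0) (hv1 : G.Adj v x1) (hv2 : G.Adj v x2) (hv3 : G.Adj v x3)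
    (a1 : G.Adj x1 x0) (a2 : G.Adj x2 x1) (a3 : G.Adj x3 x2)
    (hnbr : ∀ y, G.Adj v y → y = x0 ∨ y = x1 ∨ y = x2 ∨ y = x3) :
    Nat.card {u // G.square.Adj v u} ≤ 20 := by
  classical
  set N : Finset V := Finset.univ.filter (fun u => G.Adj v u) with hN
  have hNcard : N.card = 4 := by rw [hN, ← degN_eq_card_filter]; exact h4
  set M : V → Finset V := fun u => Finset.univ.filter
      (fun y => G.Adj u y ∧ ¬ G.Adj v y ∧ y ≠ v) with hM
  have hMcard : ∀ u ∈ N, (M u).card ≤ 4 := by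
    intro u hu
    rw [hN, Finset.mem_filter] at hu
    have huv : G.Adj v u := hu.2
    have hw : ∃ w, G.Adj u w ∧ G.Adj v w := by
      rcases hnbr u huv with rfl | rfl | rfl | rfl
      · exact ⟨x1, a1.symm, hv1⟩
      · exact ⟨x2, a2.symm, hv2⟩
      · exact ⟨x1, a2, hv1⟩
      · exact ⟨x2, a3, hv2⟩
    obtain ⟨w, huw, hvw⟩ := hw
    have hsub : M u ⊆ (Finset.univ.filter (fun y => G.Adj u y)) \ {v, w} := by
      intro y hy
      rw [hM, Finset.mem_filter] at hy
      obtain ⟨-, hy1, hy2, hy3⟩ := hy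
      rw [Finset.mem_sdiff, Finset.mem_filter]
      refine ⟨⟨Finset.mem_univ _, hy1⟩, ?_⟩
      simp only [Finset.mem_insert, Finset.mem_singleton]
      push_neg
      exact ⟨hy3, fun hc => hy2 (hc ▸ hvw)⟩
    have htsub : ({v, w} : Finset V) ⊆ Finset.univ.filter (fun y => G.Adj u y) := by
      intro z hz
      simp only [Finset.mem_insert, Finset.mem_singleton] at hz
      rw [Finset.mem_filter]
      rcases hz with rfl | rfl
      · exact ⟨Finset.mem_univ _, huv.symm⟩
      · exact ⟨Finset.mem_univ _, huw⟩
    have hc2 : ({v, w} : Finset V).card = 2 := by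
      rw [Finset.card_insert_of_notMem, Finset.card_singleton]
      simp [hvw.ne]
    have := Finset.card_le_card hsub
    rw [Finset.card_sdiff_of_subset htsub, hc2, ← degN_eq_card_filter] at this
    have := hdeg u
    omega
  have hsq : Finset.univ.filter (fun u => G.square.Adj v u) ⊆ N ∪ N.biUnion M := by
    intro y hy
    rw [Finset.mem_filter] at hy
    obtain ⟨-, hne, hor⟩ := hy
    by_cases hvy : G.Adj v y
    · exact Finset.mem_union_left _ (by rw [hN, Finset.mem_filter]; exact ⟨Finset.mem_univ _, hvy⟩)
    · rcases hor with h | ⟨w, h1, h2⟩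
      · exact absurd h hvy
      · refine Finset.mem_union_right _ (Finset.mem_biUnion.mpr ⟨w, ?_, ?_⟩)
        · rw [hN, Finset.mem_filter]; exact ⟨Finset.mem_univ _, h1⟩
        · rw [hM, Finset.mem_filter]
          exact ⟨Finset.mem_univ _, h2, hvy, hne.symm⟩
  have h1 : Nat.card {u // G.square.Adj v u}
      = (Finset.univ.filter (fun u => G.square.Adj v u)).card := by
    rw [Nat.card_eq_fintype_card, Fintype.card_subtype]
  rw [h1]
  calc (Finset.univ.filter (fun u => G.square.Adj v u)).card
      ≤ (N ∪ N.biUnion M).card := Finset.card_le_card hsq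
    _ ≤ N.card + (N.biUnion M).card := Finset.card_union_le _ _
    _ ≤ N.card + ∑ u ∈ N, (M u).card := Nat.add_le_add_left (Finset.card_biUnion_le) _
    _ ≤ 4 + 16 := by
        rw [hNcard]
        have := Finset.sum_le_card_nsmul N (fun u => (M u).card) 4 hMcard
        rw [hNcard] at this
        simp only [smul_eq_mul] at this
        omega
end G2

section G4
variable {V : Type*} [DecidableEq V]

lemma isPlanar_case2' (G : SimpleGraph V) (hG : IsPlanar G) (v x0 x3 : V)
    (h0 : G.Adj v x0) (h3 : G.Adj v x3) (h03 : x0 ≠ x3) (hn : ¬ G.Adj x0 x3) :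
    IsPlanar ((G.comap (Subtype.val : {u : V // u ≠ v} → V)) ⊔
      SimpleGraph.fromEdgeSet {s((⟨x0, h0.ne'⟩ : {u : V // u ≠ v}), ⟨x3, h3.ne'⟩)}) := by
  classical
  obtain ⟨pos, arc, hinj, harc, hdisj⟩ := hG
  set a : ℝ → ℝ × ℝ := arc x0 v with ha
  set bb : ℝ → ℝ × ℝ := arc v x3 with hbb
  obtain ⟨ac, a0, a1, ai, av⟩ := harc x0 v h0.symm
  obtain ⟨bc, b0, b1, bi, bv⟩ := harc v x3 h3
  rw [← ha] at ac a0 a1 ai av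
  rw [← hbb] at bc b0 b1 bi bv
  set γ : ℝ → ℝ × ℝ := fun t => if t ≤ 1/2 then a (2*t) else bb (2*t - 1) with hγ
  have hcont : Continuous γ := by
    rw [hγ]
    refine Continuous.if_le (ac.comp (continuous_const.mul continuous_id)) (bc.comp ((continuous_const.mul continuous_id).sub continuous_const))
      continuous_id continuous_const ?_
    intro t ht
    rw [ht]
    norm_num [a1, b0]
  have hγ0 : γ 0 = pos x0 := by
    rw [hγ]
    norm_num [a0]
  have hγ1 : γ 1 = pos x3 := by
    rw [hγ]
    norm_num [b1]
  have himg : γ '' Set.Ioo 0 1 ⊆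
      (a '' Set.Ioo 0 1 ∪ {pos v}) ∪ bb '' Set.Ioo 0 1 := by
    rintro p ⟨t, ⟨ht0, ht1⟩, rfl⟩
    by_cases ht : t ≤ 1/2
    · rcases lt_or_eq_of_le ht with ht' | ht'
      · refine Or.inl (Or.inl ⟨2*t, ⟨by linarith, by linarith⟩, ?_⟩)
        rw [hγ]; simp only [if_pos ht]
      · refine Or.inl (Or.inr ?_)
        rw [hγ]; simp only [if_pos ht, ht']
        norm_num [a1]
    · refine Or.inr ⟨2*t - 1, ⟨by push_neg at ht; linarith, by linarith⟩, ?_⟩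
      rw [hγ]; simp only [if_neg ht]
  have hvert : ∀ w : V, w ≠ v → pos w ∉ γ '' Set.Ioo 0 1 := by
    intro w hw hmem
    rcases himg hmem with (h | h) | h
    · exact av w h
    · rw [Set.mem_singleton_iff] at h; exact hw (hinj h)
    · exact bv w h
  have hd_ab : Disjoint (a '' Set.Ioo 0 1) (bb '' Set.Ioo 0 1) := by
    refine hdisj x0 v v x3 h0.symm h3 ?_
    simp only [Ne, Sym2.eq_iff]
    push_neg
    constructor
    · intro hc; exact absurd hc h0.ne'
    · intro hc; exact absurd hc h03
  have hcross : ∀ s t : ℝ, 0 ≤ s → s ≤ 1/2 → 1/2 < t → t ≤ 1 →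
      a (2*s) ≠ bb (2*t - 1) := by
    intro s t hs0 hs ht ht1 heq
    by_cases hta : 2*t - 1 = 1
    · rw [hta, b1] at heq
      by_cases h2s0 : 2*s = 0
      · rw [h2s0, a0] at heq; exact h03 (hinj heq)
      · by_cases h2s1 : 2*s = 1
        · rw [h2s1, a1] at heq; exact h3.ne (hinj heq)
        · exact av x3 ⟨2*s, ⟨lt_of_le_of_ne (by linarith) (Ne.symm h2s0),
            lt_of_le_of_ne (by linarith) h2s1⟩, heq⟩
    · have hbIoo : bb (2*t - 1) ∈ bb '' Set.Ioo 0 1 :=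
        ⟨2*t - 1, ⟨by linarith, lt_of_le_of_ne (by linarith) hta⟩, rfl⟩
      by_cases h2s0 : 2*s = 0
      · rw [h2s0, a0] at heq; exact bv x0 (heq ▸ hbIoo)
      · by_cases h2s1 : 2*s = 1
        · rw [h2s1, a1] at heq; exact bv v (heq ▸ hbIoo)
        · have haIoo : a (2*s) ∈ a '' Set.Ioo 0 1 :=
            ⟨2*s, ⟨lt_of_le_of_ne (by linarith) (Ne.symm h2s0),
              lt_of_le_of_ne (by linarith) h2s1⟩, rfl⟩
          exact Set.disjoint_left.mp hd_ab haIoo (heq ▸ hbIoo)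
  have hinjγ : Set.InjOn γ (Set.Icc 0 1) := by
    rintro s ⟨hs0, hs1⟩ t ⟨ht0, ht1⟩ heq
    rw [hγ] at heq
    by_cases hs : s ≤ 1/2 <;> by_cases ht : t ≤ 1/2
    · simp only [if_pos hs, if_pos ht] at heq
      have := ai ⟨by linarith, by linarith⟩ ⟨by linarith, by linarith⟩ heq
      linarith
    · simp only [if_pos hs, if_neg ht] at heq
      exact absurd heq (hcross s t hs0 hs (not_le.mp ht) ht1)
    · simp only [if_neg hs, if_pos ht] at heq
      exact absurd heq.symm (hcross t s ht0 ht (not_le.mp hs) hs1)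
    · simp only [if_neg hs, if_neg ht] at heq
      push_neg at hs ht
      have := bi ⟨by linarith, by linarith⟩ ⟨by linarith, by linarith⟩ heq
      linarith
  have hγdisj : ∀ y z : V, y ≠ v → z ≠ v → G.Adj y z →
      Disjoint (γ '' Set.Ioo 0 1) (arc y z '' Set.Ioo 0 1) := by
    intro y z hy hz hyz
    refine Set.disjoint_left.mpr (fun p hp hp' => ?_)
    rcases himg hp with (h | h) | h
    · refine Set.disjoint_left.mp (hdisj x0 v y z h0.symm hyz ?_) h hp'
      simp only [Ne, Sym2.eq_iff]
      push_neg
      exact ⟨fun _ hc => hz hc.symm, fun _ hc => hy hc.symm⟩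
    · rw [Set.mem_singleton_iff] at h
      rw [h] at hp'
      exact (harc y z hyz).2.2.2.2 v hp'
    · refine Set.disjoint_left.mp (hdisj v x3 y z h3 hyz ?_) h hp'
      simp only [Ne, Sym2.eq_iff]
      push_neg
      exact ⟨fun hc _ => hy hc.symm, fun hc _ => hz hc.symm⟩
  have hrevimg : (fun t => γ (1 - t)) '' Set.Ioo 0 1 = γ '' Set.Ioo 0 1 := by
    rw [show (fun t => γ (1 - t)) = γ ∘ (fun t : ℝ => 1 - t) from rfl, Set.image_comp,
      Set.image_const_sub_Ioo]
    norm_num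
  set F : {u : V // u ≠ v} → {u : V // u ≠ v} → ℝ → ℝ × ℝ := fun p q =>
    if ↑p = x0 ∧ ↑q = x3 then γ
    else if ↑p = x3 ∧ ↑q = x0 then (fun t => γ (1 - t))
    else arc ↑p ↑q with hF
  have hF1 : ∀ p q : {u : V // u ≠ v}, (↑p = x0 ∧ ↑q = x3) → F p q = γ := by
    intro p q h
    simp only [hF]
    rw [if_pos h]
  have hF2 : ∀ p q : {u : V // u ≠ v}, (↑p = x3 ∧ ↑q = x0) → F p q = fun t => γ (1 - t) := by
    intro p q h
    simp only [hF]
    rw [if_neg, if_pos h]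
    rintro ⟨hc, -⟩
    exact h03 (hc.symm.trans h.1)
  have hF3 : ∀ p q : {u : V // u ≠ v}, G.Adj ↑p ↑q → F p q = arc ↑p ↑q := by
    intro p q h
    simp only [hF]
    rw [if_neg, if_neg]
    · rintro ⟨hc1, hc2⟩
      exact hn ((hc1 ▸ hc2 ▸ h).symm)
    · rintro ⟨hc1, hc2⟩
      exact hn (hc1 ▸ hc2 ▸ h)
  set A : {u : V // u ≠ v} := ⟨x0, h0.ne'⟩ with hA
  set B : {u : V // u ≠ v} := ⟨x3, h3.ne'⟩ with hB
  have hchar : ∀ p q : {u : V // u ≠ v},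
      ((G.comap (Subtype.val : {u : V // u ≠ v} → V)) ⊔
        SimpleGraph.fromEdgeSet {s(A, B)}).Adj p q →
      ((↑p = x0 ∧ ↑q = x3) ∨ (↑p = x3 ∧ ↑q = x0)) ∨ G.Adj ↑p ↑q := by
    intro p q h
    rw [SimpleGraph.sup_adj, SimpleGraph.comap_adj, SimpleGraph.fromEdgeSet_adj,
      Set.mem_singleton_iff, Sym2.eq_iff] at h
    rcases h with h | ⟨⟨h1, h2⟩ | ⟨h1, h2⟩, -⟩
    · exact Or.inr h
    · exact Or.inl (Or.inl ⟨(congrArg Subtype.val h1 : ↑p = x0),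
        (congrArg Subtype.val h2 : ↑q = x3)⟩)
    · exact Or.inl (Or.inr ⟨(congrArg Subtype.val h1 : ↑p = x3),
        (congrArg Subtype.val h2 : ↑q = x0)⟩)
  refine ⟨pos ∘ Subtype.val, F, hinj.comp Subtype.val_injective, ?_, ?_⟩
  · intro p q h
    rcases hchar p q h with (⟨hp1, hq1⟩ | ⟨hp1, hq1⟩) | hG'
    · rw [hF1 p q ⟨hp1, hq1⟩]
      refine ⟨hcont, ?_, ?_, hinjγ, fun w => hvert ↑w w.2⟩
      · rw [hγ0]; exact congrArg pos hp1.symm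
      · rw [hγ1]; exact congrArg pos hq1.symm
    · rw [hF2 p q ⟨hp1, hq1⟩]
      refine ⟨hcont.comp (continuous_const.sub continuous_id), ?_, ?_, ?_, ?_⟩
      · show γ (1 - 0) = pos ↑p
        norm_num [hγ1]
        exact congrArg pos hp1.symm
      · show γ (1 - 1) = pos ↑q
        norm_num [hγ0]
        exact congrArg pos hq1.symm
      · rintro s ⟨hs0, hs1⟩ t ⟨ht0, ht1⟩ heq
        have := hinjγ ⟨by linarith, by linarith⟩ ⟨by linarith, by linarith⟩ heq
        linarith
      · intro w
        rw [hrevimg]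
        exact hvert ↑w w.2
    · rw [hF3 p q hG']
      obtain ⟨c1, c2, c3, c4, c5⟩ := harc ↑p ↑q hG'
      exact ⟨c1, c2, c3, c4, fun w => c5 ↑w⟩
  · intro p q r s hpq hrs hne
    have hsymAB : ∀ (p q : {u : V // u ≠ v}), (↑p = x0 ∧ ↑q = x3) → s(p, q) = s(A, B) := by
      rintro p q ⟨h1, h2⟩
      rw [show p = A from Subtype.ext h1, show q = B from Subtype.ext h2]
    have hsymBA : ∀ (p q : {u : V // u ≠ v}), (↑p = x3 ∧ ↑q = x0) → s(p, q) = s(A, B) := by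
      rintro p q ⟨h1, h2⟩
      rw [show p = B from Subtype.ext h1, show q = A from Subtype.ext h2, Sym2.eq_swap]
    rcases hchar p q hpq with (hc1 | hc1) | hc1 <;> rcases hchar r s hrs with (hc2 | hc2) | hc2
    · exact absurd ((hsymAB p q hc1).trans (hsymAB r s hc2).symm) hne
    · exact absurd ((hsymAB p q hc1).trans (hsymBA r s hc2).symm) hne
    · rw [hF1 p q hc1, hF3 r s hc2]
      exact hγdisj ↑r ↑s r.2 s.2 hc2
    · exact absurd ((hsymBA p q hc1).trans (hsymAB r s hc2).symm) hne
    · exact absurd ((hsymBA p q hc1).trans (hsymBA r s hc2).symm) hne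
    · rw [hF2 p q hc1, hF3 r s hc2, hrevimg]
      exact hγdisj ↑r ↑s r.2 s.2 hc2
    · rw [hF3 p q hc1, hF1 r s hc2]
      exact (hγdisj ↑p ↑q p.2 q.2 hc1).symm
    · rw [hF3 p q hc1, hF2 r s hc2, hrevimg]
      exact (hγdisj ↑p ↑q p.2 q.2 hc1).symm
    · rw [hF3 p q hc1, hF3 r s hc2]
      refine hdisj ↑p ↑q ↑r ↑s hc1 hc2 (fun hc => hne ?_)
      rw [Sym2.eq_iff] at hc ⊢
      rcases hc with ⟨h1, h2⟩ | ⟨h1, h2⟩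
      · exact Or.inl ⟨Subtype.ext h1, Subtype.ext h2⟩
      · exact Or.inr ⟨Subtype.ext h1, Subtype.ext h2⟩
end G4

section G3
variable {V : Type*} [Fintype V] [DecidableEq V] {G : SimpleGraph V} [DecidableRel G.Adj]

lemma case2 (hmin : MinimalCex6 G) (e : PlaneEmbedding G) (v : V) (h4 : degN G v = 4)
    (f1 f2 f3 : e.Faces) (h12 : f1 ≠ f2) (h13 : f1 ≠ f3) (h23 : f2 ≠ f3)
    (hf1 : e.faceDeg f1 = 3) (hf2 : e.faceDeg f2 = 3) (hf3 : e.faceDeg f3 = 3)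
    (hv1 : e.VertexOnFace v f1) (hv2 : e.VertexOnFace v f2) (hv3 : e.VertexOnFace v f3) :
    False := by
  classical
  obtain ⟨b, hb, hgood⟩ := case2_struct e h4 f1 f2 f3 h12 h13 h23 hf1 hf2 hf3 hv1 hv2 hv3
  have hDcard : (dartsAt G v).card = 4 := (card_dartsAt (G := G) v).trans h4
  have hmemk : ∀ k : ℕ, (e.rot ^ k) b ∈ dartsAt G v := by
    intro k
    induction k with
    | zero => simpa using hb
    | succ n ih => rw [pow_succ', Equiv.Perm.mul_apply]; exact rot_mem e ih
  set x : ℕ → V := fun k => ((e.rot ^ k) b).toProd.2 with hx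
  have hvx : ∀ k, G.Adj v (x k) := fun k => dart_head_adj (hmemk k)
  have hstep : ∀ k : ℕ, 0 < k → k < 4 → G.Adj (x k) (x (k - 1)) := by
    intro k hk0 hk4
    have hne : (e.rot ^ k) b ≠ b := rot_pow_ne e v hb hk0 (by rw [hDcard]; exact hk4)
    have hgd := hgood _ (hmemk k) hne
    have h := triangle_adj e _ hgd
    have hrw : e.rot⁻¹ ((e.rot ^ k) b) = (e.rot ^ (k - 1)) b := by
      conv_lhs => rw [show k = (k - 1) + 1 from (Nat.succ_pred_eq_of_pos hk0).symm]
      rw [pow_succ', Equiv.Perm.mul_apply, Equiv.Perm.inv_apply_self]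
    rwa [hrw] at h
  have hxne : ∀ j k : ℕ, j < k → k < 4 → x j ≠ x k := by
    intro j k hjk hk4 hc
    have hdeq : (e.rot ^ j) b = (e.rot ^ k) b := head_inj (hmemk j) (hmemk k) hc
    have h1 : (e.rot ^ j) ((e.rot ^ (k - j)) b) = (e.rot ^ j) b := by
      rw [← Equiv.Perm.mul_apply, ← pow_add, show j + (k - j) = k from by omega]
      exact hdeq.symm
    exact rot_pow_ne e v hb (i := k - j) (by omega) (by rw [hDcard]; omega)
      ((e.rot ^ j).injective h1)
  have hnbr : ∀ y, G.Adj v y → y = x 0 ∨ y = x 1 ∨ y = x 2 ∨ y = x 3 := by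
    intro y hy
    have hd : (⟨(v, y), hy⟩ : G.Dart) ∈ dartsAt G v := mem_dartsAt.mpr rfl
    obtain ⟨k, hk, hkeq⟩ := (rot_isCycleOn e v).exists_pow_eq hb hd
    rw [hDcard] at hk
    have hxy : x k = y := by
      show ((e.rot ^ k) b).toProd.2 = y
      rw [hkeq]
    interval_cases k
    · exact Or.inl hxy.symm
    · exact Or.inr (Or.inl hxy.symm)
    · exact Or.inr (Or.inr (Or.inl hxy.symm))
    · exact Or.inr (Or.inr (Or.inr hxy.symm))
  have a1 : G.Adj (x 1) (x 0) := hstep 1 (by norm_num) (by norm_num)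
  have a2 : G.Adj (x 2) (x 1) := hstep 2 (by norm_num) (by norm_num)
  have a3 : G.Adj (x 3) (x 2) := hstep 3 (by norm_num) (by norm_num)
  have hcard := case2_card (G := G) h4 hmin.2.1 (hvx 0) (hvx 1) (hvx 2) (hvx 3) a1 a2 a3 hnbr
  by_cases hadj03 : G.Adj (x 0) (x 3)
  · set H := G.comap (Subtype.val : {u : V // u ≠ v} → V) with hHdef
    have hp : IsPlanar H := isPlanar_comap G _ Subtype.val_injective hmin.1
    have hd : ∀ w, degN H w ≤ 6 := fun w =>
      le_trans (degN_comap_le G _ Subtype.val_injective w) (hmin.2.1 _)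
    have hcol : H.square.Colorable 21 := minCex_apply hmin v H hp hd
    have htrans : ∀ p q (hp' : p ≠ v) (hq' : q ≠ v), G.square.Adj p q →
        H.square.Adj ⟨p, hp'⟩ ⟨q, hq'⟩ := by
      rintro p q hp' hq' ⟨hne, hor⟩
      refine ⟨fun hc => hne (congrArg Subtype.val hc), ?_⟩
      rcases hor with h | ⟨w, hw1, hw2⟩
      · exact Or.inl h
      · by_cases hwv : w = v
        · subst hwv
          rcases hnbr p hw1.symm with rfl | rfl | rfl | rfl <;>
            rcases hnbr q hw2 with rfl | rfl | rfl | rfl <;>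
            first
            | exact absurd rfl hne
            | exact Or.inl a1
            | exact Or.inl a1.symm
            | exact Or.inl a2
            | exact Or.inl a2.symm
            | exact Or.inl a3
            | exact Or.inl a3.symm
            | exact Or.inl hadj03
            | exact Or.inl hadj03.symm
            | exact Or.inr ⟨⟨x 1, (hvx 1).ne'⟩, a1.symm, a2.symm⟩
            | exact Or.inr ⟨⟨x 1, (hvx 1).ne'⟩, a2, a1⟩
            | exact Or.inr ⟨⟨x 2, (hvx 2).ne'⟩, a2.symm, a3.symm⟩
            | exact Or.inr ⟨⟨x 2, (hvx 2).ne'⟩, a3, a2⟩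
        · exact Or.inr ⟨⟨w, hwv⟩, hw1, hw2⟩
    have hc21 := extend_coloring G v H hcol htrans hcard
    exact absurd hmin.2.2.1 (not_lt.mpr (chi2_le_of_colorable hc21))
  · set A : {u : V // u ≠ v} := ⟨x 0, (hvx 0).ne'⟩ with hA
    set B : {u : V // u ≠ v} := ⟨x 3, (hvx 3).ne'⟩ with hB
    have hAB : A ≠ B := fun hc =>
      hxne 0 3 (by norm_num) (by norm_num) (congrArg Subtype.val hc)
    set H := (G.comap (Subtype.val : {u : V // u ≠ v} → V)) ⊔
      SimpleGraph.fromEdgeSet {s(A, B)} with hHdef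
    have hHadj : ∀ a b : {u : V // u ≠ v}, H.Adj a b ↔
        (G.Adj ↑a ↑b ∨ ((a = A ∧ b = B) ∨ (a = B ∧ b = A))) := by
      intro a b
      rw [hHdef, SimpleGraph.sup_adj, SimpleGraph.fromEdgeSet_adj]
      simp only [Set.mem_singleton_iff, Sym2.eq_iff, SimpleGraph.comap_adj]
      constructor
      · rintro (h | ⟨h, -⟩)
        · exact Or.inl h
        · exact Or.inr h
      · rintro (h | h)
        · exact Or.inl h
        · refine Or.inr ⟨h, ?_⟩
          rcases h with ⟨rfl, rfl⟩ | ⟨rfl, rfl⟩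
          · exact hAB
          · exact hAB.symm
    have hp : IsPlanar H := by
      rw [hHdef]
      exact isPlanar_case2' G hmin.1 v (x 0) (x 3) (hvx 0) (hvx 3)
        (hxne 0 3 (by norm_num) (by norm_num)) hadj03
    have hd : ∀ w, degN H w ≤ 6 := by
      intro w
      by_cases hwA : w = A
      · subst hwA
        have hF : ∀ b : {b // H.Adj A b}, b.1 ≠ B → G.Adj (x 0) ↑b.1 := by
          intro b hbB
          rcases (hHadj A b.1).mp b.2 with h | ⟨-, hBB⟩ | ⟨hA', -⟩
          · exact h
          · exact absurd hBB hbB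
          · exact absurd hA' hAB
        have hinj : Function.Injective (fun b : {b // H.Adj A b} =>
            if hb : b.1 = B then (⟨v, (hvx 0).symm⟩ : {y // G.Adj (x 0) y})
            else ⟨↑b.1, hF b hb⟩) := by
          intro b b' heq
          by_cases hb : b.1 = B <;> by_cases hb' : b'.1 = B
          · exact Subtype.ext (hb.trans hb'.symm)
          · simp only [dif_pos hb, dif_neg hb', Subtype.mk.injEq] at heq
            exact absurd heq.symm b'.1.2
          · simp only [dif_neg hb, dif_pos hb', Subtype.mk.injEq] at heq
            exact absurd heq b.1.2
          · simp only [dif_neg hb, dif_neg hb', Subtype.mk.injEq] at heq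
            exact Subtype.ext (Subtype.ext heq)
        calc degN H A ≤ Nat.card {y // G.Adj (x 0) y} :=
              Nat.card_le_card_of_injective _ hinj
          _ ≤ 6 := by rw [← degN]; exact hmin.2.1 _
      · by_cases hwB : w = B
        · subst hwB
          have hF : ∀ b : {b // H.Adj B b}, b.1 ≠ A → G.Adj (x 3) ↑b.1 := by
            intro b hbA
            rcases (hHadj B b.1).mp b.2 with h | ⟨hB', -⟩ | ⟨-, hAA⟩
            · exact h
            · exact absurd hB'.symm hAB
            · exact absurd hAA hbA
          have hinj : Function.Injective (fun b : {b // H.Adj B b} =>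
              if hb : b.1 = A then (⟨v, (hvx 3).symm⟩ : {y // G.Adj (x 3) y})
              else ⟨↑b.1, hF b hb⟩) := by
            intro b b' heq
            by_cases hb : b.1 = A <;> by_cases hb' : b'.1 = A
            · exact Subtype.ext (hb.trans hb'.symm)
            · simp only [dif_pos hb, dif_neg hb', Subtype.mk.injEq] at heq
              exact absurd heq.symm b'.1.2
            · simp only [dif_neg hb, dif_pos hb', Subtype.mk.injEq] at heq
              exact absurd heq b.1.2
            · simp only [dif_neg hb, dif_neg hb', Subtype.mk.injEq] at heq
              exact Subtype.ext (Subtype.ext heq)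
          calc degN H B ≤ Nat.card {y // G.Adj (x 3) y} :=
                Nat.card_le_card_of_injective _ hinj
            _ ≤ 6 := by rw [← degN]; exact hmin.2.1 _
        · have hF : ∀ b : {b // H.Adj w b}, G.Adj ↑w ↑b.1 := by
            intro b
            rcases (hHadj w b.1).mp b.2 with h | ⟨hwA', -⟩ | ⟨hwB', -⟩
            · exact h
            · exact absurd hwA' hwA
            · exact absurd hwB' hwB
          have hinj : Function.Injective (fun b : {b // H.Adj w b} =>
              (⟨↑b.1, hF b⟩ : {y // G.Adj ↑w y})) := by
            intro b b' heq
            simp only [Subtype.mk.injEq] at heq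
            exact Subtype.ext (Subtype.ext heq)
          calc degN H w ≤ Nat.card {y // G.Adj ↑w y} :=
                Nat.card_le_card_of_injective _ hinj
            _ ≤ 6 := by rw [← degN]; exact hmin.2.1 _
    have hcol : H.square.Colorable 21 := minCex_apply hmin v H hp hd
    have hGH : ∀ (a b : {u : V // u ≠ v}), G.Adj ↑a ↑b → H.Adj a b := fun a b h =>
      (hHadj a b).mpr (Or.inl h)
    have htrans : ∀ p q (hp' : p ≠ v) (hq' : q ≠ v), G.square.Adj p q →
        H.square.Adj ⟨p, hp'⟩ ⟨q, hq'⟩ := by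
      rintro p q hp' hq' ⟨hne, hor⟩
      refine ⟨fun hc => hne (congrArg Subtype.val hc), ?_⟩
      rcases hor with h | ⟨w, hw1, hw2⟩
      · exact Or.inl (hGH _ _ h)
      · by_cases hwv : w = v
        · subst hwv
          rcases hnbr p hw1.symm with rfl | rfl | rfl | rfl <;>
            rcases hnbr q hw2 with rfl | rfl | rfl | rfl <;>
            first
            | exact absurd rfl hne
            | exact Or.inl (hGH _ _ a1)
            | exact Or.inl (hGH _ _ a1.symm)
            | exact Or.inl (hGH _ _ a2)
            | exact Or.inl (hGH _ _ a2.symm)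
            | exact Or.inl (hGH _ _ a3)
            | exact Or.inl (hGH _ _ a3.symm)
            | exact Or.inl ((hHadj _ _).mpr (Or.inr (Or.inl ⟨rfl, rfl⟩)))
            | exact Or.inl ((hHadj _ _).mpr (Or.inr (Or.inr ⟨rfl, rfl⟩)))
            | exact Or.inr ⟨⟨x 1, (hvx 1).ne'⟩, hGH _ _ a1.symm, hGH _ _ a2.symm⟩
            | exact Or.inr ⟨⟨x 1, (hvx 1).ne'⟩, hGH _ _ a2, hGH _ _ a1⟩
            | exact Or.inr ⟨⟨x 2, (hvx 2).ne'⟩, hGH _ _ a2.symm, hGH _ _ a3.symm⟩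
            | exact Or.inr ⟨⟨x 2, (hvx 2).ne'⟩, hGH _ _ a3, hGH _ _ a2⟩
        · exact Or.inr ⟨⟨w, hwv⟩, hGH _ _ hw1, hGH _ _ hw2⟩
    have hc21 := extend_coloring G v H hcol htrans hcard
    exact absurd hmin.2.2.1 (not_lt.mpr (chi2_le_of_colorable hc21))
end G3


/-- A minimal counterexample to the bound `χ₂ ≤ 21` for planar graphs of maximum degree
at most 6 contains neither a triangulated vertex of degree 5, nor a vertex of degree 4
incident to at least three triangular faces. -/
theorem stmt17 {V : Type*} [Fintype V] [DecidableEq V] (G : SimpleGraph V)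
    [DecidableRel G.Adj] (hmin : MinimalCex6 G)
    (e : PlaneEmbedding G) (hsphere : e.IsSphere) :
    (¬ ∃ v : V, degN G v = 5 ∧ e.Triangulated v) ∧
    (¬ ∃ (v : V) (f₁ f₂ f₃ : e.Faces), degN G v = 4 ∧
      f₁ ≠ f₂ ∧ f₁ ≠ f₃ ∧ f₂ ≠ f₃ ∧
      e.faceDeg f₁ = 3 ∧ e.faceDeg f₂ = 3 ∧ e.faceDeg f₃ = 3 ∧
      e.VertexOnFace v f₁ ∧ e.VertexOnFace v f₂ ∧ e.VertexOnFace v f₃) := by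
  constructor
  · rintro ⟨v, h5, htri⟩
    exact case1 hmin e v h5 htri
  · rintro ⟨v, f1, f2, f3, h4, h12, h13, h23, hd1, hd2, hd3, hv1, hv2, hv3⟩
    exact case2 hmin e v h4 f1 f2 f3 h12 h13 h23 hd1 hd2 hd3 hv1 hv2 hv3
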